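/- For any real numbers b ≥ ε > 0 and β ≥ (2ε^2 + 1 + √(4ε^2+1))/(2ε^2), the inequality β/(1+b^2) - 1/b^2 - 1/((β-1)·b^2·(1+b^2)) ≥ 0 holds. -/

import Mathlib

theorem stmt_2 (ε b β : ℝ) (hε : 0 < ε) (hb : ε ≤ b)
    (hβ : β ≥ (2 * ε ^ 2 + 1 + Real.sqrt (4 * ε ^ 2 + 1)) / (2 * ε ^ 2)) :
    β / (1 + b ^ 2) - 1 / b ^ 2 - 1 / ((β - 1) * b ^ 2 * (1 + b ^ 2)) ≥ 0 := by
  set s := Real.sqrt (4 * ε ^ 2 + 1) with hsdef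
  have hs0 : 0 ≤ s := Real.sqrt_nonneg _
  have hs2 : s ^ 2 = 4 * ε ^ 2 + 1 := Real.sq_sqrt (by positivity)
  have hε2 : 0 < ε ^ 2 := by positivity
  have hβ' : 2 * ε ^ 2 * β ≥ 2 * ε ^ 2 + 1 + s := by
    rw [ge_iff_le, div_le_iff₀ (by positivity)] at hβ
    linarith
  have hs1 : 1 ≤ s := by nlinarith
  have hβ1 : 1 < β := by nlinarith
  have hb2 : ε ^ 2 ≤ b ^ 2 := by nlinarith
  have hbpos : 0 < b ^ 2 := pow_pos (lt_of_lt_of_le hε hb) 2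
  have key : ε ^ 2 * (β - 1) ^ 2 ≥ β := by
    nlinarith [mul_nonneg (by nlinarith : (0:ℝ) ≤ 2 * ε ^ 2 * β - (2 * ε ^ 2 + 1) - s)
      (by nlinarith : (0:ℝ) ≤ 2 * ε ^ 2 * β - (2 * ε ^ 2 + 1) + s)]
  have key2 : 0 ≤ b ^ 2 * (β - 1) ^ 2 - β := by nlinarith [sq_nonneg (β - 1)]
  have hd : 0 < (β - 1) * b ^ 2 * (1 + b ^ 2) := by
    apply mul_pos (mul_pos (by linarith) hbpos) (by linarith)
  have heq : β / (1 + b ^ 2) - 1 / b ^ 2 - 1 / ((β - 1) * b ^ 2 * (1 + b ^ 2)) =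
      (b ^ 2 * (β - 1) ^ 2 - β) / ((β - 1) * b ^ 2 * (1 + b ^ 2)) := by
    field_simp [(lt_of_lt_of_le hε hb).ne', (by positivity : (1:ℝ) + b ^ 2 ≠ 0), (by linarith : β - 1 ≠ 0)]
    ring
  rw [heq]
  exact div_nonneg key2 hd.le
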